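/- For N ≥ 1 and k fixed, let u_{1k},…,u_{Nk} have joint density on [0,1]^N proportional to exp(−ν Σ_{i=1}^N (u_{(i)k} − i/N)²), where u_{(i)k} denotes the i-th order statistic. Then as ν → ∞ followed by N → ∞, the marginal distribution of u_{1k} converges weakly to the uniform distribution on [0,1]. -/

import Mathlib

open MeasureTheory Set Filter Finset

noncomputable def grid (N : ℕ) : Fin (N + 1) → ℝ := fun i => ((i : ℝ) + 1) / (N + 1)

lemma grid_mono (N : ℕ) : Monotone (grid N) := by
  intro i j hij
  unfold grid
  have : (0:ℝ) < (N:ℝ) + 1 := by positivity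
  gcongr
  exact_mod_cast hij

noncomputable def Sfun (N : ℕ) (u : Fin (N + 1) → ℝ) : ℝ :=
  ∑ i : Fin (N + 1), (u (Tuple.sort u i) - grid N i) ^ 2

lemma sup'_eq (N : ℕ) (u : Fin (N + 1) → ℝ) :
    (Finset.univ.sup' Finset.univ_nonempty
      (fun σ : Equiv.Perm (Fin (N + 1)) => ∑ i, u (σ i) * grid N i))
    = ∑ i, u (Tuple.sort u i) * grid N i := by
  apply le_antisymm
  · apply Finset.sup'_le
    intro σ _
    set s : Fin (N+1) → ℝ := u ∘ Tuple.sort u with hs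
    have hmono : Monotone s := Tuple.monotone_sort u
    have hmv : Monovary s (grid N) := hmono.monovary (grid_mono N)
    have hu : ∀ i, u (σ i) = s ((Tuple.sort u).symm (σ i)) := by
      intro i; simp [hs]
    calc ∑ i, u (σ i) * grid N i
        = ∑ i, s ((σ.trans (Tuple.sort u).symm) i) * grid N i := by
          refine Finset.sum_congr rfl fun i _ => ?_; rw [hu]; rfl
      _ ≤ ∑ i, s i * grid N i := hmv.sum_comp_perm_mul_le_sum_mul
      _ = ∑ i, u (Tuple.sort u i) * grid N i := rfl
  · exact Finset.le_sup' (fun σ : Equiv.Perm (Fin (N + 1)) => ∑ i, u (σ i) * grid N i) (Finset.mem_univ (Tuple.sort u))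

lemma Sfun_eq (N : ℕ) (u : Fin (N + 1) → ℝ) :
    Sfun N u = ∑ i, u i ^ 2 + ∑ i, grid N i ^ 2
      - 2 * (Finset.univ.sup' Finset.univ_nonempty
        (fun σ : Equiv.Perm (Fin (N + 1)) => ∑ i, u (σ i) * grid N i)) := by
  rw [sup'_eq]
  unfold Sfun
  have h1 : ∑ i, (u (Tuple.sort u i) - grid N i) ^ 2
      = ∑ i, (u (Tuple.sort u i)) ^ 2 - 2 * ∑ i, u (Tuple.sort u i) * grid N i
        + ∑ i, grid N i ^ 2 := by
    rw [Finset.mul_sum, ← Finset.sum_sub_distrib, ← Finset.sum_add_distrib]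
    refine Finset.sum_congr rfl fun i _ => by ring
  have h2 : ∑ i, (u (Tuple.sort u i)) ^ 2 = ∑ i, u i ^ 2 :=
    Equiv.sum_comp (Tuple.sort u) (fun i => u i ^ 2)
  rw [h1, h2]; ring

lemma Sfun_continuous (N : ℕ) : Continuous (Sfun N) := by
  have : Sfun N = fun u => ∑ i, u i ^ 2 + ∑ i, grid N i ^ 2
      - 2 * (Finset.univ.sup' Finset.univ_nonempty
        (fun σ : Equiv.Perm (Fin (N + 1)) => ∑ i, u (σ i) * grid N i)) :=
    funext (Sfun_eq N)
  rw [this]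
  apply Continuous.sub
  · apply Continuous.add
    · exact continuous_finset_sum _ fun i _ => (continuous_apply i).pow 2
    · exact continuous_const
  · apply Continuous.mul continuous_const
    exact Continuous.finset_sup'_apply Finset.univ_nonempty fun (σ : Equiv.Perm (Fin (N + 1))) _ =>
      continuous_finset_sum _ fun i _ => (continuous_apply (σ i)).mul continuous_const

lemma Sfun_perm (N : ℕ) (u : Fin (N + 1) → ℝ) (σ : Equiv.Perm (Fin (N + 1))) :
    Sfun N (u ∘ σ) = Sfun N u := by
  unfold Sfun
  have h := Tuple.comp_perm_comp_sort_eq_comp_sort (σ := σ) (f := u)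
  refine Finset.sum_congr rfl fun i _ => ?_
  have : (u ∘ σ) (Tuple.sort (u ∘ σ) i) = u (Tuple.sort u i) := congrFun h i
  rw [this]

lemma Sfun_nonneg (N : ℕ) (u : Fin (N + 1) → ℝ) : 0 ≤ Sfun N u :=
  Finset.sum_nonneg fun i _ => sq_nonneg _

lemma Sfun_grid (N : ℕ) : Sfun N (grid N) = 0 := by
  unfold Sfun
  have : Tuple.sort (grid N) = Equiv.refl _ :=
    Tuple.sort_eq_refl_iff_monotone.mpr (grid_mono N)
  rw [this]
  simp

lemma sum_eq_of_Sfun_zero (N : ℕ) (φ : ℝ → ℝ) (u : Fin (N + 1) → ℝ)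
    (h : Sfun N u = 0) : ∑ j, φ (u j) = ∑ j, φ (grid N j) := by
  have h0 : ∀ i ∈ Finset.univ, (u (Tuple.sort u i) - grid N i) ^ 2 = 0 := by
    rw [← Finset.sum_eq_zero_iff_of_nonneg fun i _ => sq_nonneg _]
    exact h
  have h1 : ∀ i, u (Tuple.sort u i) = grid N i := by
    intro i
    have := h0 i (Finset.mem_univ i)
    have := pow_eq_zero_iff (n := 2) (by norm_num) |>.mp this
    linarith
  calc ∑ j, φ (u j) = ∑ j, φ (u (Tuple.sort u j)) :=
        (Equiv.sum_comp (Tuple.sort u) (fun j => φ (u j))).symm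
    _ = ∑ j, φ (grid N j) := Finset.sum_congr rfl fun j _ => by rw [h1]

lemma grid_mem_Icc (N : ℕ) : grid N ∈ Set.Icc (0 : Fin (N + 1) → ℝ) 1 := by
  constructor
  · intro i
    show (0 : ℝ) ≤ grid N i
    unfold grid; positivity
  · intro i
    show grid N i ≤ 1
    unfold grid
    rw [div_le_one (by positivity)]
    have : (i : ℝ) ≤ N := by exact_mod_cast Fin.is_le i
    linarith

lemma sublevel_pos (N : ℕ) {δ : ℝ} (hδ : 0 < δ) :
    0 < volume {u : Fin (N + 1) → ℝ | u ∈ Set.Icc 0 1 ∧ Sfun N u < δ} := by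
  set O := Sfun N ⁻¹' Iio δ ∩ Set.pi Set.univ (fun _ : Fin (N + 1) => Ioo (0 : ℝ) 1) with hO
  have hO_open : IsOpen O :=
    ((isOpen_Iio).preimage (Sfun_continuous N)).inter
      (isOpen_set_pi finite_univ fun _ _ => isOpen_Ioo)
  have hO_sub : O ⊆ {u | u ∈ Set.Icc 0 1 ∧ Sfun N u < δ} := by
    rintro u ⟨h1, h2⟩
    exact ⟨⟨fun i => (h2 i (mem_univ i)).1.le, fun i => (h2 i (mem_univ i)).2.le⟩, h1⟩
  have hO_ne : O.Nonempty := by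
    set T := {t : ℝ | Sfun N (fun i => grid N i - t) < δ} with hT
    have hTopen : IsOpen T := by
      have hc : Continuous fun t : ℝ => Sfun N (fun i => grid N i - t) :=
        (Sfun_continuous N).comp (by continuity)
      exact isOpen_Iio.preimage hc
    have h0T : (0 : ℝ) ∈ T := by
      simp only [hT, mem_setOf_eq, sub_zero]
      simpa using (Sfun_grid N ▸ hδ)
    obtain ⟨η, hη, hball⟩ := Metric.isOpen_iff.mp hTopen 0 h0T
    set t0 := min η (1 / (N + 1 : ℝ)) / 2 with ht0
    have hn : (0 : ℝ) < 1 / (N + 1 : ℝ) := by positivity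
    have ht0pos : 0 < t0 := by positivity
    have ht0η : t0 < η := by
      have := min_le_left η (1 / (N + 1 : ℝ)); simp only [ht0]; linarith
    have ht0n : t0 < 1 / (N + 1 : ℝ) := by
      have := min_le_right η (1 / (N + 1 : ℝ)); simp only [ht0]; linarith
    refine ⟨fun i => grid N i - t0, ?_, ?_⟩
    · exact hball (by simpa [Real.dist_eq, abs_of_pos ht0pos] using ht0η)
    · intro i _
      have hgi : 1 / (N + 1 : ℝ) ≤ grid N i := by
        unfold grid
        rw [div_le_div_iff₀ (by positivity) (by positivity)]
        have : (0 : ℝ) ≤ (i : ℝ) := by positivity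
        ring_nf; nlinarith
      have hgu : grid N i ≤ 1 := (grid_mem_Icc N).2 i
      refine ⟨?_, ?_⟩
      · show 0 < grid N i - t0; linarith
      · show grid N i - t0 < 1; linarith
  calc (0 : ENNReal) < volume O := hO_open.measure_pos volume hO_ne
    _ ≤ _ := measure_mono hO_sub

lemma integrableOn_cube (N : ℕ) {f : (Fin (N + 1) → ℝ) → ℝ} (hf : Continuous f)
    {s : Set (Fin (N + 1) → ℝ)} (hss : s ⊆ Set.Icc 0 1) :
    IntegrableOn f s :=
  (hf.continuousOn.integrableOn_compact isCompact_Icc).mono_set hss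

lemma concentration (N : ℕ) (Φ : (Fin (N + 1) → ℝ) → ℝ) (hΦ : Continuous Φ) (L : ℝ)
    (hL : ∀ u, Sfun N u = 0 → Φ u = L) :
    Tendsto (fun ν : ℝ =>
        (∫ u in Set.Icc (0 : Fin (N + 1) → ℝ) 1, Φ u * Real.exp (-ν * Sfun N u)) /
          (∫ u in Set.Icc (0 : Fin (N + 1) → ℝ) 1, Real.exp (-ν * Sfun N u)))
      atTop (nhds L) := by
  set K : Set (Fin (N + 1) → ℝ) := Set.Icc 0 1 with hK
  have hKc : IsCompact K := isCompact_Icc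
  have hKm : MeasurableSet K := measurableSet_Icc
  have hKfin : volume K < ⊤ := hKc.measure_lt_top
  obtain ⟨C, hC⟩ := hKc.exists_bound_of_continuousOn (hΦ.sub continuous_const).continuousOn
  have hC' : ∀ u ∈ K, |Φ u - L| ≤ C := by simpa [Real.norm_eq_abs] using hC
  have h0K : (0 : Fin (N + 1) → ℝ) ∈ K := by
    constructor <;> intro i <;> simp
  have hC0 : 0 ≤ C := le_trans (abs_nonneg _) (hC' 0 h0K)
  set V : ℝ := (volume K).toReal with hV
  have hV0 : 0 ≤ V := ENNReal.toReal_nonneg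
  have hwcont : ∀ ν : ℝ, Continuous fun u => Real.exp (-ν * Sfun N u) := fun ν =>
    Real.continuous_exp.comp ((continuous_const.mul (Sfun_continuous N)))
  have hwpos : ∀ ν u, 0 < Real.exp (-ν * Sfun N u) := fun ν u => Real.exp_pos _
  rw [Metric.tendsto_nhds]
  intro ε hε
  -- choose δ from compactness
  have hδex : ∃ δ > 0, ∀ u ∈ K, Sfun N u < δ → |Φ u - L| ≤ ε / 3 := by
    set A : Set (Fin (N + 1) → ℝ) := K ∩ {u | ε / 3 ≤ |Φ u - L|} with hA
    have hAc : IsCompact A :=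
      hKc.inter_right (isClosed_le continuous_const (hΦ.sub continuous_const).abs)
    rcases A.eq_empty_or_nonempty with hAe | hAne
    · refine ⟨1, one_pos, fun u hu _ => ?_⟩
      by_contra h
      push_neg at h
      have hmem : u ∈ A := ⟨hu, h.le⟩
      rw [hAe] at hmem
      exact hmem
    · obtain ⟨a, haA, ha⟩ := hAc.exists_isMinOn hAne (Sfun_continuous N).continuousOn
      refine ⟨Sfun N a, ?_, ?_⟩
      · rcases (Sfun_nonneg N a).lt_or_eq with h | h
        · exact h
        · exfalso
          have : Φ a = L := hL a h.symm
          have h2 := haA.2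
          rw [Set.mem_setOf_eq, this, sub_self, abs_zero] at h2
          linarith
      · intro u hu hlt
        by_contra h
        push_neg at h
        exact absurd (ha ⟨hu, h.le⟩) (not_le.mpr hlt)
  obtain ⟨δ, hδpos, hδ⟩ := hδex
  -- positive-volume core set
  set B : Set (Fin (N + 1) → ℝ) := {u | u ∈ K ∧ Sfun N u < δ / 2} with hB
  have hBm : MeasurableSet B := by
    have : B = K ∩ Sfun N ⁻¹' Iio (δ / 2) := rfl
    rw [this]
    exact hKm.inter ((Sfun_continuous N).measurable measurableSet_Iio)
  have hBsub : B ⊆ K := fun u hu => hu.1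
  have hBvol : 0 < volume B := sublevel_pos N (by linarith)
  have hBfin : volume B < ⊤ := lt_of_le_of_lt (measure_mono hBsub) hKfin
  set b : ℝ := (volume B).toReal with hb
  have hb0 : 0 < b := ENNReal.toReal_pos hBvol.ne' hBfin.ne
  -- split sets
  set K1 : Set (Fin (N + 1) → ℝ) := {u | u ∈ K ∧ Sfun N u < δ} with hK1
  set K2 : Set (Fin (N + 1) → ℝ) := {u | u ∈ K ∧ δ ≤ Sfun N u} with hK2
  have hK1m : MeasurableSet K1 :=
    hKm.inter ((Sfun_continuous N).measurable measurableSet_Iio)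
  have hK2m : MeasurableSet K2 :=
    hKm.inter ((Sfun_continuous N).measurable measurableSet_Ici)
  have hK1sub : K1 ⊆ K := fun u hu => hu.1
  have hK2sub : K2 ⊆ K := fun u hu => hu.1
  have hdisj : Disjoint K1 K2 := by
    rw [Set.disjoint_left]
    rintro u ⟨_, h1⟩ ⟨_, h2⟩
    exact absurd h1 (not_lt.mpr h2)
  have hunion : K1 ∪ K2 = K := by
    ext u
    constructor
    · rintro (h | h) <;> exact h.1
    · intro hu
      rcases lt_or_ge (Sfun N u) δ with h | h
      · exact Or.inl ⟨hu, h⟩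
      · exact Or.inr ⟨hu, h⟩
  -- the eventual bound
  have hmain : ∀ ν : ℝ, 0 ≤ ν →
      dist ((∫ u in K, Φ u * Real.exp (-ν * Sfun N u)) /
        (∫ u in K, Real.exp (-ν * Sfun N u))) L
      ≤ ε / 3 + (C * V / b) * Real.exp (-ν * (δ / 2)) := by
    intro ν hν
    set w : (Fin (N + 1) → ℝ) → ℝ := fun u => Real.exp (-ν * Sfun N u) with hw
    have hwint : IntegrableOn w K := integrableOn_cube N (hwcont ν) (le_refl _)
    have hΦwint : IntegrableOn (fun u => Φ u * w u) K :=
      integrableOn_cube N (hΦ.mul (hwcont ν)) (le_refl _)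
    have hgwint : IntegrableOn (fun u => (Φ u - L) * w u) K :=
      integrableOn_cube N ((hΦ.sub continuous_const).mul (hwcont ν)) (le_refl _)
    set Zν : ℝ := ∫ u in K, w u with hZν
    -- lower bound for Z
    have hZlb : Real.exp (-ν * (δ / 2)) * b ≤ Zν := by
      have h1 : ∫ u in B, w u ≤ Zν :=
        setIntegral_mono_set hwint
          (Filter.Eventually.of_forall fun u => (hwpos ν u).le)
          (HasSubset.Subset.eventuallyLE hBsub)
      have h2 : Real.exp (-ν * (δ / 2)) * b ≤ ∫ u in B, w u := by
        apply setIntegral_ge_of_const_le_real hBm hBfin.ne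
        · intro u hu
          apply Real.exp_le_exp.mpr
          have := hu.2
          nlinarith [Sfun_nonneg N u]
        · exact hwint.mono_set hBsub
      linarith
    have hZ0 : 0 < Zν := lt_of_lt_of_le (by positivity) hZlb
    -- numerator split
    have hsplit : ∫ u in K, (Φ u - L) * w u
        = (∫ u in K1, (Φ u - L) * w u) + ∫ u in K2, (Φ u - L) * w u := by
      rw [← hunion] at hgwint ⊢
      exact setIntegral_union hdisj hK2m (hgwint.mono_set Set.subset_union_left)
        (hgwint.mono_set Set.subset_union_right)
    -- bound on K1 piece
    have hbd1 : |∫ u in K1, (Φ u - L) * w u| ≤ ε / 3 * Zν := by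
      have h1 : |∫ u in K1, (Φ u - L) * w u| ≤ ∫ u in K1, |Φ u - L| * |w u| := by
        simpa [Real.norm_eq_abs] using
          norm_integral_le_integral_norm (μ := volume.restrict K1) (fun u => (Φ u - L) * w u)
      have h2 : ∫ u in K1, |Φ u - L| * |w u| ≤ ∫ u in K1, ε / 3 * w u := by
        apply setIntegral_mono_on
          (integrableOn_cube N (((hΦ.sub continuous_const).abs).mul (hwcont ν).abs) hK1sub)
          ((hwint.mono_set hK1sub).const_mul _) hK1m
        intro u hu
        show |Φ u - L| * |Real.exp (-ν * Sfun N u)| ≤ ε / 3 * w u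
        rw [abs_of_pos (hwpos ν u)]
        exact mul_le_mul_of_nonneg_right (hδ u hu.1 hu.2) (hwpos ν u).le
      have h3 : ∫ u in K1, ε / 3 * w u ≤ ε / 3 * Zν := by
        rw [integral_const_mul]
        apply mul_le_mul_of_nonneg_left _ (by linarith)
        exact setIntegral_mono_set hwint
          (Filter.Eventually.of_forall fun u => (hwpos ν u).le)
          (HasSubset.Subset.eventuallyLE hK1sub)
      linarith
    -- bound on K2 piece
    have hbd2 : |∫ u in K2, (Φ u - L) * w u| ≤ C * Real.exp (-ν * δ) * V := by
      have h1 : |∫ u in K2, (Φ u - L) * w u|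
          ≤ C * Real.exp (-ν * δ) * (volume K2).toReal := by
        have hbnd : ∀ u ∈ K2, ‖(Φ u - L) * w u‖ ≤ C * Real.exp (-ν * δ) := by
          intro u hu
          rw [Real.norm_eq_abs, abs_mul, abs_of_pos (hwpos ν u)]
          have hb1 : |Φ u - L| ≤ C := hC' u hu.1
          have hb2 : w u ≤ Real.exp (-ν * δ) := by
            apply Real.exp_le_exp.mpr
            nlinarith [hu.2]
          have : 0 ≤ w u := (hwpos ν u).le
          nlinarith [abs_nonneg (Φ u - L)]
        have := norm_setIntegral_le_of_norm_le_const
          (lt_of_le_of_lt (measure_mono hK2sub) hKfin)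
          (C := C * Real.exp (-ν * δ))
          (f := fun u => (Φ u - L) * w u) hbnd
        simpa [Real.norm_eq_abs, neg_mul, measureReal_def] using this
      have h2 : (volume K2).toReal ≤ V :=
        ENNReal.toReal_mono hKfin.ne (measure_mono hK2sub)
      calc |∫ u in K2, (Φ u - L) * w u| ≤ C * Real.exp (-ν * δ) * (volume K2).toReal := h1
        _ ≤ C * Real.exp (-ν * δ) * V :=
            mul_le_mul_of_nonneg_left h2 (mul_nonneg hC0 (Real.exp_pos _).le)
    -- assemble
    have hratio : (∫ u in K, Φ u * w u) / Zν - L = (∫ u in K, (Φ u - L) * w u) / Zν := by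
      rw [eq_div_iff hZ0.ne', sub_mul, div_mul_cancel₀ _ hZ0.ne']
      congr 1
      rw [← integral_const_mul]
      rw [← integral_sub hΦwint (hwint.const_mul L)]
      refine setIntegral_congr_fun hKm fun u _ => by ring
    rw [Real.dist_eq, hratio, abs_div, abs_of_pos hZ0, div_le_iff₀ hZ0]
    have habs : |∫ u in K, (Φ u - L) * w u| ≤ ε / 3 * Zν + C * Real.exp (-ν * δ) * V := by
      rw [hsplit]
      calc |(∫ u in K1, (Φ u - L) * w u) + ∫ u in K2, (Φ u - L) * w u|
          ≤ |∫ u in K1, (Φ u - L) * w u| + |∫ u in K2, (Φ u - L) * w u| := abs_add_le _ _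
        _ ≤ ε / 3 * Zν + C * Real.exp (-ν * δ) * V := add_le_add hbd1 hbd2
    refine le_trans habs ?_
    have hkey : C * Real.exp (-ν * δ) * V ≤ (C * V / b) * Real.exp (-ν * (δ / 2)) * Zν := by
      have h1 : Real.exp (-ν * (δ / 2)) * b ≤ Zν := hZlb
      have h2 : Real.exp (-ν * δ) = Real.exp (-ν * (δ / 2)) * Real.exp (-ν * (δ / 2)) := by
        rw [← Real.exp_add]; ring_nf
      calc C * Real.exp (-ν * δ) * V
          = (C * V / b) * (Real.exp (-ν * (δ / 2)) * b) * Real.exp (-ν * (δ / 2)) := by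
            rw [h2]; field_simp
        _ ≤ (C * V / b) * Zν * Real.exp (-ν * (δ / 2)) := by
            have h3 : 0 ≤ C * V / b := by positivity
            exact mul_le_mul_of_nonneg_right
              (mul_le_mul_of_nonneg_left h1 h3) (Real.exp_pos _).le
        _ = (C * V / b) * Real.exp (-ν * (δ / 2)) * Zν := by ring
    linarith [hkey]
  -- finish: tail term tends to 0
  have htail : Tendsto (fun ν : ℝ => (C * V / b) * Real.exp (-ν * (δ / 2))) atTop (nhds 0) := by
    have h1 : Tendsto (fun ν : ℝ => -ν * (δ / 2)) atTop atBot := by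
      apply Tendsto.atBot_mul_const (by linarith)
      exact tendsto_neg_atTop_atBot.comp tendsto_id |>.congr fun x => rfl
    have := (Real.tendsto_exp_atBot.comp h1).const_mul (C * V / b)
    simpa using this
  have hev : ∀ᶠ ν : ℝ in atTop, (C * V / b) * Real.exp (-ν * (δ / 2)) < ε / 3 := by
    have := htail.eventually (Iio_mem_nhds (show (0:ℝ) < ε / 3 by linarith))
    simpa using this
  filter_upwards [hev, eventually_ge_atTop (0 : ℝ)] with ν h1 h2
  calc dist _ L ≤ ε / 3 + (C * V / b) * Real.exp (-ν * (δ / 2)) := hmain ν h2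
    _ < ε / 3 + ε / 3 := by linarith
    _ < ε := by linarith

lemma integral_perm (N : ℕ) (f : (Fin (N + 1) → ℝ) → ℝ) (τ : Equiv.Perm (Fin (N + 1))) :
    ∫ u in Set.Icc (0 : Fin (N + 1) → ℝ) 1, f (u ∘ τ) = ∫ u in Set.Icc 0 1, f u := by
  set e : (Fin (N + 1) → ℝ) ≃ᵐ (Fin (N + 1) → ℝ) :=
    MeasurableEquiv.piCongrLeft (fun _ : Fin (N + 1) => ℝ) τ.symm with he
  have hmp : MeasurePreserving e volume volume :=
    volume_measurePreserving_piCongrLeft (fun _ : Fin (N + 1) => ℝ) τ.symm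
  have happ : ∀ u : Fin (N + 1) → ℝ, e u = u ∘ τ := by
    intro u
    funext i
    rw [he]
    simp [MeasurableEquiv.piCongrLeft, Equiv.piCongrLeft]
  have hpre : e ⁻¹' (Set.Icc 0 1) = Set.Icc 0 1 := by
    ext u
    simp only [Set.mem_preimage, happ, Set.mem_Icc, Pi.le_def]
    constructor
    · rintro ⟨h1, h2⟩
      refine ⟨fun i => ?_, fun i => ?_⟩
      · simpa using h1 (τ.symm i)
      · simpa using h2 (τ.symm i)
    · rintro ⟨h1, h2⟩
      exact ⟨fun i => h1 (τ i), fun i => h2 (τ i)⟩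
  calc ∫ u in Set.Icc (0 : Fin (N + 1) → ℝ) 1, f (u ∘ τ)
      = ∫ u in e ⁻¹' Set.Icc 0 1, f (e u) := by
        rw [hpre]
        exact setIntegral_congr_fun measurableSet_Icc fun u _ => by rw [happ]
    _ = ∫ u in Set.Icc 0 1, f u :=
        hmp.setIntegral_preimage_emb e.measurableEmbedding f _

lemma numerator_eq (N : ℕ) (φ : ℝ → ℝ) (hφ : Continuous φ) (ν : ℝ) :
    ∫ u in Set.Icc (0 : Fin (N + 1) → ℝ) 1, φ (u 0) * Real.exp (-ν * Sfun N u)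
      = ∫ u in Set.Icc (0 : Fin (N + 1) → ℝ) 1,
          ((∑ j, φ (u j)) / (N + 1)) * Real.exp (-ν * Sfun N u) := by
  have hwcont : Continuous fun u : Fin (N + 1) → ℝ => Real.exp (-ν * Sfun N u) :=
    Real.continuous_exp.comp (continuous_const.mul (Sfun_continuous N))
  have hj : ∀ j : Fin (N + 1),
      ∫ u in Set.Icc (0 : Fin (N + 1) → ℝ) 1, φ (u j) * Real.exp (-ν * Sfun N u)
        = ∫ u in Set.Icc (0 : Fin (N + 1) → ℝ) 1, φ (u 0) * Real.exp (-ν * Sfun N u) := by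
    intro j
    have := integral_perm N (fun u => φ (u 0) * Real.exp (-ν * Sfun N u)) (Equiv.swap 0 j)
    rw [← this]
    refine setIntegral_congr_fun measurableSet_Icc fun u _ => ?_
    have h1 : (u ∘ Equiv.swap 0 j) 0 = u j := by simp [Equiv.swap_apply_left]
    rw [h1, Sfun_perm]
  have hsum : ∑ j : Fin (N + 1),
      (∫ u in Set.Icc (0 : Fin (N + 1) → ℝ) 1, φ (u j) * Real.exp (-ν * Sfun N u))
      = (N + 1 : ℝ) * ∫ u in Set.Icc (0 : Fin (N + 1) → ℝ) 1,
          φ (u 0) * Real.exp (-ν * Sfun N u) := by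
    rw [Finset.sum_congr rfl fun j _ => hj j, Finset.sum_const, Finset.card_univ,
      Fintype.card_fin, nsmul_eq_mul]
    push_cast
    ring
  have hint : ∑ j : Fin (N + 1),
      (∫ u in Set.Icc (0 : Fin (N + 1) → ℝ) 1, φ (u j) * Real.exp (-ν * Sfun N u))
      = ∫ u in Set.Icc (0 : Fin (N + 1) → ℝ) 1,
          ∑ j : Fin (N + 1), φ (u j) * Real.exp (-ν * Sfun N u) := by
    rw [integral_finset_sum]
    intro j _
    exact integrableOn_cube N (((hφ.comp (continuous_apply j))).mul hwcont) (le_refl _)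
  have hNpos : (0 : ℝ) < (N : ℝ) + 1 := by positivity
  rw [eq_comm]
  calc ∫ u in Set.Icc (0 : Fin (N + 1) → ℝ) 1,
          ((∑ j, φ (u j)) / (N + 1)) * Real.exp (-ν * Sfun N u)
      = (∫ u in Set.Icc (0 : Fin (N + 1) → ℝ) 1,
          ∑ j : Fin (N + 1), φ (u j) * Real.exp (-ν * Sfun N u)) / (N + 1) := by
        rw [← integral_div]
        refine setIntegral_congr_fun measurableSet_Icc fun u _ => ?_
        rw [div_mul_eq_mul_div, Finset.sum_mul]
    _ = ((N + 1 : ℝ) * ∫ u in Set.Icc (0 : Fin (N + 1) → ℝ) 1,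
          φ (u 0) * Real.exp (-ν * Sfun N u)) / (N + 1) := by rw [← hint, hsum]
    _ = ∫ u in Set.Icc (0 : Fin (N + 1) → ℝ) 1, φ (u 0) * Real.exp (-ν * Sfun N u) := by
        field_simp

lemma riemann (φ : ℝ → ℝ) (hφ : Continuous φ) :
    Tendsto (fun N : ℕ => (∑ j : Fin (N + 1), φ (grid N j)) / (N + 1))
      atTop (nhds (∫ x in Set.Icc (0 : ℝ) 1, φ x)) := by
  have hI : ∫ x in Set.Icc (0 : ℝ) 1, φ x = ∫ x in (0 : ℝ)..1, φ x := by
    rw [intervalIntegral.integral_of_le zero_le_one, integral_Icc_eq_integral_Ioc]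
  have huc : UniformContinuousOn φ (Set.Icc (0 : ℝ) 1) :=
    isCompact_Icc.uniformContinuousOn_of_continuous hφ.continuousOn
  rw [Metric.tendsto_atTop]
  intro ε hε
  obtain ⟨δ, hδpos, hδ⟩ := (Metric.uniformContinuousOn_iff.mp huc) (ε / 2) (by linarith)
  obtain ⟨N₀, hN₀⟩ := exists_nat_gt (1 / δ)
  refine ⟨N₀, fun N hN => ?_⟩
  have hnpos : (0 : ℝ) < (N : ℝ) + 1 := by positivity
  have hinv : 1 / ((N : ℝ) + 1) < δ := by
    rw [div_lt_iff₀ hnpos]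
    have h1 : (1 / δ) < (N : ℝ) + 1 := by
      calc (1 / δ) < (N₀ : ℝ) := hN₀
        _ ≤ (N : ℝ) := by exact_mod_cast hN
        _ ≤ (N : ℝ) + 1 := by linarith
    rw [div_lt_iff₀ hδpos] at h1
    linarith [h1]
  set a : ℕ → ℝ := fun i => (i : ℝ) / ((N : ℝ) + 1) with ha
  have hstep : ∀ i : ℕ, a (i + 1) - a i = 1 / ((N : ℝ) + 1) := by
    intro i
    simp only [ha]
    push_cast
    field_simp
    ring
  have hmono : ∀ i : ℕ, a i ≤ a (i + 1) := by
    intro i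
    have := hstep i
    have h2 : (0 : ℝ) < 1 / ((N : ℝ) + 1) := by positivity
    linarith
  have hmem : ∀ i : ℕ, i < N + 1 → ∀ x ∈ Set.Ioc (a i) (a (i + 1)),
      x ∈ Set.Icc (0 : ℝ) 1 ∧ a (i + 1) ∈ Set.Icc (0 : ℝ) 1 ∧ dist (a (i+1)) x < δ := by
    intro i hi x hx
    have hai : 0 ≤ a i := by
      simp only [ha]; positivity
    have hai1 : a (i + 1) ≤ 1 := by
      simp only [ha]
      rw [div_le_one hnpos]
      push_cast
      have : (i : ℝ) ≤ (N : ℝ) := by exact_mod_cast Nat.lt_succ_iff.mp hi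
      linarith
    have h1 : a i < x := hx.1
    have h2 : x ≤ a (i + 1) := hx.2
    refine ⟨⟨by linarith, by linarith⟩, ⟨by positivity, hai1⟩, ?_⟩
    rw [Real.dist_eq, abs_of_nonneg (by linarith)]
    have := hstep i
    linarith
  have hintSplit : ∫ x in (0 : ℝ)..1, φ x
      = ∑ i ∈ Finset.range (N + 1), ∫ x in a i..a (i + 1), φ x := by
    have h := intervalIntegral.sum_integral_adjacent_intervals
      (a := a) (n := N + 1) (f := φ) (μ := volume) (fun i _ => hφ.intervalIntegrable _ _)
    rw [h]
    have h0 : a 0 = 0 := by simp [ha]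
    have h1 : a (N + 1) = 1 := by
      simp only [ha]
      push_cast
      field_simp
    rw [h0, h1]
  have hsum : (∑ j : Fin (N + 1), φ (grid N j)) / ((N : ℝ) + 1)
      = ∑ i ∈ Finset.range (N + 1), (1 / ((N : ℝ) + 1)) * φ (a (i + 1)) := by
    rw [Finset.sum_div]
    simp only [grid]
    rw [Fin.sum_univ_eq_sum_range (fun i : ℕ => φ (((i : ℝ) + 1) / ((N : ℝ) + 1)) / ((N : ℝ) + 1))]
    refine Finset.sum_congr rfl fun i _ => ?_
    have : a (i + 1) = ((i : ℝ) + 1) / ((N : ℝ) + 1) := by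
      simp only [ha]; push_cast; ring
    rw [this]
    ring
  have hterm : ∀ i ∈ Finset.range (N + 1),
      |(1 / ((N : ℝ) + 1)) * φ (a (i + 1)) - ∫ x in a i..a (i + 1), φ x|
        ≤ ε / 2 * (1 / ((N : ℝ) + 1)) := by
    intro i hi
    have hconst : (1 / ((N : ℝ) + 1)) * φ (a (i + 1))
        = ∫ _x in a i..a (i + 1), φ (a (i + 1)) := by
      rw [intervalIntegral.integral_const, smul_eq_mul, hstep i]
    rw [hconst, ← intervalIntegral.integral_sub (intervalIntegrable_const)
      (hφ.intervalIntegrable _ _)]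
    have hb := intervalIntegral.norm_integral_le_of_norm_le_const
      (C := ε / 2) (f := fun x => φ (a (i + 1)) - φ x) (a := a i) (b := a (i + 1)) ?_
    · rw [Real.norm_eq_abs] at hb
      refine hb.trans ?_
      rw [abs_of_nonneg (by linarith [hstep i, hmono i] : (0:ℝ) ≤ a (i+1) - a i), hstep i]
    · intro x hx
      rw [Set.uIoc_of_le (hmono i)] at hx
      obtain ⟨hx1, hx2, hx3⟩ := hmem i (Finset.mem_range.mp hi) x hx
      rw [Real.norm_eq_abs]
      have := hδ (a (i + 1)) hx2 x hx1 hx3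
      rw [Real.dist_eq] at this
      exact this.le
  rw [Real.dist_eq, hI, hintSplit, hsum, ← Finset.sum_sub_distrib]
  calc |∑ i ∈ Finset.range (N + 1),
          ((1 / ((N : ℝ) + 1)) * φ (a (i + 1)) - ∫ x in a i..a (i + 1), φ x)|
      ≤ ∑ i ∈ Finset.range (N + 1),
          |(1 / ((N : ℝ) + 1)) * φ (a (i + 1)) - ∫ x in a i..a (i + 1), φ x| :=
        Finset.abs_sum_le_sum_abs _ _
    _ ≤ ∑ _i ∈ Finset.range (N + 1), ε / 2 * (1 / ((N : ℝ) + 1)) :=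
        Finset.sum_le_sum hterm
    _ = ε / 2 := by
        rw [Finset.sum_const, Finset.card_range, nsmul_eq_mul]
        push_cast
        field_simp
    _ < ε := by linarith

/-- Constraint-relaxation prior (Proposition 1 of the NIFTY paper). -/
theorem constraint_relaxation_prior_uniform_limit
    (S : (N : ℕ) → (Fin (N + 1) → ℝ) → ℝ)
    (hS : ∀ N u, S N u = ∑ i : Fin (N + 1),
      (u (Tuple.sort u i) - ((i : ℝ) + 1) / (N + 1)) ^ 2)
    (cube : (N : ℕ) → Set (Fin (N + 1) → ℝ))
    (hcube : ∀ N, cube N = {u | ∀ i, u i ∈ Icc (0:ℝ) 1})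
    (Z : ℕ → ℝ → ℝ)
    (hZ : ∀ N ν, Z N ν = ∫ u in cube N, Real.exp (-ν * S N u)) :
    ∀ φ : ℝ → ℝ, Continuous φ → (∃ C, ∀ x, |φ x| ≤ C) →
      Tendsto (fun N : ℕ =>
          limUnder atTop (fun ν : ℝ =>
            (∫ u in cube N, φ (u 0) * Real.exp (-ν * S N u)) / Z N ν))
        atTop (nhds (∫ x in Icc (0:ℝ) 1, φ x)) := by
  intro φ hφc _
  have hSS : ∀ N u, S N u = Sfun N u := fun N u => by rw [hS]; rfl
  have hcubeIcc : ∀ N, cube N = Set.Icc (0 : Fin (N + 1) → ℝ) 1 := by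
    intro N
    rw [hcube N]
    ext u
    constructor
    · intro h
      exact ⟨fun i => (h i).1, fun i => (h i).2⟩
    · intro h i
      exact ⟨h.1 i, h.2 i⟩
  have hlim : ∀ N : ℕ, limUnder atTop (fun ν : ℝ =>
      (∫ u in cube N, φ (u 0) * Real.exp (-ν * S N u)) / Z N ν)
      = (∑ j : Fin (N + 1), φ (grid N j)) / (N + 1) := by
    intro N
    have hΦcont : Continuous fun u : Fin (N + 1) → ℝ => (∑ j, φ (u j)) / ((N : ℝ) + 1) :=
      (continuous_finset_sum _ fun j _ => hφc.comp (continuous_apply j)).div_const _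
    have hL : ∀ u, Sfun N u = 0 →
        (∑ j, φ (u j)) / ((N : ℝ) + 1) = (∑ j : Fin (N + 1), φ (grid N j)) / (N + 1) := by
      intro u hu
      rw [sum_eq_of_Sfun_zero N φ u hu]
    have heq : (fun ν : ℝ =>
        (∫ u in cube N, φ (u 0) * Real.exp (-ν * S N u)) / Z N ν)
        = fun ν : ℝ =>
          (∫ u in Set.Icc (0 : Fin (N + 1) → ℝ) 1,
            ((∑ j, φ (u j)) / ((N : ℝ) + 1)) * Real.exp (-ν * Sfun N u)) /
          (∫ u in Set.Icc (0 : Fin (N + 1) → ℝ) 1, Real.exp (-ν * Sfun N u)) := by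
      funext ν
      rw [hZ, hcubeIcc N]
      have h1 : ∀ u, φ (u 0) * Real.exp (-ν * S N u)
          = φ (u 0) * Real.exp (-ν * Sfun N u) := fun u => by rw [hSS]
      have h2 : ∀ u, Real.exp (-ν * S N u) = Real.exp (-ν * Sfun N u) :=
        fun u => by rw [hSS]
      simp only [h1, h2]
      rw [numerator_eq N φ hφc ν]
    rw [heq]
    exact (concentration N _ hΦcont _ hL).limUnder_eq
  have hfun : (fun N : ℕ => limUnder atTop (fun ν : ℝ =>
      (∫ u in cube N, φ (u 0) * Real.exp (-ν * S N u)) / Z N ν))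
      = fun N : ℕ => (∑ j : Fin (N + 1), φ (grid N j)) / (N + 1) :=
    funext hlim
  rw [hfun]
  exact riemann φ hφc
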